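/- Let L be a positive-definite linear functional on ℝ[X] and (P̃_k)_{k≥0} the orthonormal polynomial sequence (with positive leading coefficients). Then there exist real sequences (α_k) and positive reals (β_k) such that √β_{n+1}·P̃_{n+1}(x) = (x − α_n)·P̃_n(x) − √β_n·P̃_{n−1}(x) for all n ≥ 0, with P̃_{−1} ≡ 0 and P̃_0 ≡ 1/√β_0 where β_0 = L[1]. -/
import Mathlib


open Polynomial

theorem orthonormal_three_term_recurrence
    (L : Polynomial ℝ →ₗ[ℝ] ℝ)
    (hpos : ∀ p : Polynomial ℝ, p ≠ 0 → 0 < L (p ^ 2))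
    (P : ℕ → Polynomial ℝ)
    (hdeg : ∀ k, (P k).natDegree = k)
    (horth : ∀ i j, L (P i * P j) = if i = j then 1 else 0)
    (hlead : ∀ k, 0 < (P k).leadingCoeff) :
    ∃ α : ℕ → ℝ, ∃ β : ℕ → ℝ,
      (∀ k, 0 < β k) ∧
      β 0 = L 1 ∧
      P 0 = Polynomial.C (1 / Real.sqrt (β 0)) ∧
      ∀ n : ℕ,
        Polynomial.C (Real.sqrt (β (n + 1))) * P (n + 1)
          = (X - Polynomial.C (α n)) * P n
            - Polynomial.C (Real.sqrt (β n)) * (if n = 0 then 0 else P (n - 1)) := by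
  have hL1 : 0 < L 1 := by
    have := hpos 1 one_ne_zero
    simpa using this
  have hCmul : ∀ (a : ℝ) (p : Polynomial ℝ), L (C a * p) = a * L p := by
    intro a p
    rw [← smul_eq_C_mul, map_smul, smul_eq_mul]
  have hlcc : ∀ k, (P k).coeff k = (P k).leadingCoeff := by
    intro k
    rw [Polynomial.leadingCoeff, hdeg]
  -- representation in terms of P 0, ..., P m
  have hrep : ∀ m, ∀ q : Polynomial ℝ, q.natDegree ≤ m →
      ∃ a : ℕ → ℝ, q = ∑ k ∈ Finset.range (m + 1), C (a k) * P k := by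
    intro m
    induction m with
    | zero =>
      intro q hq
      obtain ⟨a0, hP0⟩ : ∃ a0, P 0 = C a0 :=
        ⟨_, eq_C_of_natDegree_le_zero (le_of_eq (hdeg 0))⟩
      have hq0 : q = C (q.coeff 0) := eq_C_of_natDegree_le_zero hq
      have ha0 : a0 = (P 0).coeff 0 := by rw [hP0, coeff_C_zero]
      have hne : a0 ≠ 0 := by rw [ha0, hlcc 0]; exact ne_of_gt (hlead 0)
      refine ⟨fun _ => q.coeff 0 / a0, ?_⟩
      rw [Finset.range_one, Finset.sum_singleton, hP0, ← C_mul, div_mul_cancel₀ _ hne]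
      exact hq0
    | succ m ih =>
      intro q hq
      set d := q.coeff (m + 1) / (P (m + 1)).leadingCoeff with hd
      have hr : (q - C d * P (m + 1)).natDegree ≤ m := by
        apply natDegree_le_iff_coeff_eq_zero.mpr
        intro j hj
        rw [coeff_sub, coeff_C_mul]
        rcases Nat.lt_or_ge j (m + 2) with h | h
        · have hj1 : j = m + 1 := by omega
          subst hj1
          rw [hlcc (m + 1), hd, div_mul_cancel₀ _ (ne_of_gt (hlead (m + 1))), sub_self]
        · have h1 : q.coeff j = 0 := coeff_eq_zero_of_natDegree_lt (by omega)
          have h2 : (P (m + 1)).coeff j = 0 :=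
            coeff_eq_zero_of_natDegree_lt (by rw [hdeg]; omega)
          rw [h1, h2, mul_zero, sub_zero]
      obtain ⟨a, ha⟩ := ih (q - C d * P (m + 1)) hr
      refine ⟨fun k => if k = m + 1 then d else a k, ?_⟩
      show q = ∑ k ∈ Finset.range (m + 1 + 1), C (if k = m + 1 then d else a k) * P k
      rw [Finset.sum_range_succ, if_pos rfl]
      have : ∑ k ∈ Finset.range (m + 1), C (if k = m + 1 then d else a k) * P k
          = ∑ k ∈ Finset.range (m + 1), C (a k) * P k := by
        refine Finset.sum_congr rfl fun k hk => ?_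
        rw [if_neg (by simp only [Finset.mem_range] at hk; omega)]
      rw [this, ← ha]
      ring
  -- orthogonality to lower-degree polynomials
  have hlow : ∀ (j : ℕ) (r : Polynomial ℝ), r.natDegree < j → L (r * P j) = 0 := by
    intro j r hr
    obtain ⟨a, ha⟩ := hrep r.natDegree r le_rfl
    rw [ha, Finset.sum_mul, map_sum]
    apply Finset.sum_eq_zero
    intro k hk
    rw [mul_assoc, hCmul, horth]
    have hkj : k ≠ j := by simp only [Finset.mem_range] at hk; omega
    rw [if_neg hkj, mul_zero]
  -- a polynomial of degree ≤ m orthogonal to P 0, ..., P m is zero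
  have hzero : ∀ m (q : Polynomial ℝ), q.natDegree ≤ m →
      (∀ k, k ≤ m → L (P k * q) = 0) → q = 0 := by
    intro m q hq h
    by_contra hne
    have hp := hpos q hne
    obtain ⟨a, ha⟩ := hrep m q hq
    have hqq : q ^ 2 = ∑ k ∈ Finset.range (m + 1), C (a k) * (P k * q) := by
      calc q ^ 2 = (∑ k ∈ Finset.range (m + 1), C (a k) * P k) * q := by rw [← ha, sq]
        _ = ∑ k ∈ Finset.range (m + 1), C (a k) * (P k * q) := by
            rw [Finset.sum_mul]
            exact Finset.sum_congr rfl fun k _ => mul_assoc _ _ _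
    have hq0 : L (q ^ 2) = 0 := by
      rw [hqq, map_sum]
      apply Finset.sum_eq_zero
      intro k hk
      rw [hCmul, h k (by simp only [Finset.mem_range] at hk; omega), mul_zero]
    exact absurd hq0 (ne_of_gt hp)
  -- the key moment computation
  have hkey : ∀ m, L (X * P m * P (m + 1)) =
      (P m).leadingCoeff / (P (m + 1)).leadingCoeff := by
    intro m
    set d := (P m).leadingCoeff / (P (m + 1)).leadingCoeff with hd
    have hr : (X * P m - C d * P (m + 1)).natDegree ≤ m := by
      apply natDegree_le_iff_coeff_eq_zero.mpr
      intro j hj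
      obtain ⟨j', rfl⟩ : ∃ j', j = j' + 1 := ⟨j - 1, by omega⟩
      rw [coeff_sub, coeff_X_mul, coeff_C_mul]
      rcases Nat.lt_or_ge j' (m + 1) with h | h
      · have hj1 : j' = m := by omega
        rw [hj1, hlcc m, hlcc (m + 1), hd, div_mul_cancel₀ _ (ne_of_gt (hlead (m + 1))), sub_self]
      · have h1 : (P m).coeff j' = 0 := coeff_eq_zero_of_natDegree_lt (by rw [hdeg]; omega)
        have h2 : (P (m + 1)).coeff (j' + 1) = 0 :=
          coeff_eq_zero_of_natDegree_lt (by rw [hdeg]; omega)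
        rw [h1, h2, mul_zero, sub_zero]
    have hx : X * P m = C d * P (m + 1) + (X * P m - C d * P (m + 1)) := by ring
    rw [hx, add_mul, map_add, hlow (m + 1) (X * P m - C d * P (m + 1)) (by omega),
      add_zero, mul_assoc, hCmul, horth, if_pos rfl, mul_one]
  -- define β
  set β : ℕ → ℝ :=
    fun k => Nat.casesOn k (L 1)
      (fun m => ((P m).leadingCoeff / (P (m + 1)).leadingCoeff) ^ 2) with hβdef
  have hβ0 : β 0 = L 1 := rfl
  have hβs : ∀ m, β (m + 1) = ((P m).leadingCoeff / (P (m + 1)).leadingCoeff) ^ 2 :=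
    fun m => rfl
  have hsq : ∀ m, Real.sqrt (β (m + 1)) = (P m).leadingCoeff / (P (m + 1)).leadingCoeff := by
    intro m
    rw [hβs m]
    exact Real.sqrt_sq (le_of_lt (div_pos (hlead m) (hlead (m + 1))))
  refine ⟨fun n => L (X * P n * P n), β, ?_, hβ0, ?_, ?_⟩
  · -- positivity of β
    intro k
    cases k with
    | zero => exact hL1
    | succ m => exact pow_pos (div_pos (hlead m) (hlead (m + 1))) 2
  · -- value of P 0
    have hP0 : P 0 = C ((P 0).coeff 0) := eq_C_of_natDegree_le_zero (le_of_eq (hdeg 0))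
    have ha : 0 < (P 0).coeff 0 := by rw [hlcc 0]; exact hlead 0
    have hLC : ∀ x : ℝ, L (C x) = x * L 1 := by
      intro x
      rw [← mul_one (C x), hCmul]
    have h1 : ((P 0).coeff 0) ^ 2 * L 1 = 1 := by
      have h := horth 0 0
      rw [if_pos rfl] at h
      rw [hP0, ← C_mul, hLC] at h
      rw [sq]
      exact h
    have h2 : ((P 0).coeff 0) ^ 2 = 1 / L 1 := by
      rw [eq_div_iff (ne_of_gt hL1)]
      exact h1
    have h3 : (P 0).coeff 0 = 1 / Real.sqrt (L 1) := by
      rw [← Real.sqrt_sq ha.le, h2, one_div, one_div, Real.sqrt_inv]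
    rw [hβ0, hP0, h3]
  · -- the recurrence
    intro n
    rw [hsq n]
    set d := (P n).leadingCoeff / (P (n + 1)).leadingCoeff with hd
    have main : (X - C (L (X * P n * P n))) * P n
        - C (Real.sqrt (β n)) * (if n = 0 then 0 else P (n - 1))
        - C d * P (n + 1) = 0 := by
      apply hzero (n + 1)
      · -- degree bound
        refine le_trans (natDegree_sub_le _ _) (max_le ?_ ?_)
        · refine le_trans (natDegree_sub_le _ _) (max_le ?_ ?_)
          · refine le_trans (natDegree_mul_le) ?_
            rw [natDegree_X_sub_C, hdeg]
            omega
          · refine le_trans (natDegree_C_mul_le _ _) ?_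
            split_ifs with hn
            · simp
            · rw [hdeg]; omega
        · refine le_trans (natDegree_C_mul_le _ _) ?_
          rw [hdeg]
      · intro k hk
        have hexp : P k * ((X - C (L (X * P n * P n))) * P n
            - C (Real.sqrt (β n)) * (if n = 0 then 0 else P (n - 1)) - C d * P (n + 1))
            = X * P n * P k - C (L (X * P n * P n)) * (P n * P k)
              - C (Real.sqrt (β n)) * ((if n = 0 then 0 else P (n - 1)) * P k)
              - C d * (P (n + 1) * P k) := by ring
        rw [hexp, map_sub, map_sub, map_sub, hCmul, hCmul, hCmul]
        rcases Nat.lt_or_ge k n with hkn | hkn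
        · -- k < n, so n = m + 1
          obtain ⟨m, rfl⟩ : ∃ m, n = m + 1 := ⟨n - 1, by omega⟩
          rw [if_neg (Nat.succ_ne_zero m)]
          simp only [Nat.add_sub_cancel]
          have hk2 : k ≤ m := by omega
          rw [horth (m + 1) k, if_neg (by omega), mul_zero,
            horth (m + 2) k, if_neg (by omega), mul_zero,
            hsq m]
          rcases eq_or_lt_of_le hk2 with rfl | hk3
          · -- k = m
            rw [show X * P (k + 1) * P k = X * P k * P (k + 1) from by ring, hkey k,
              horth k k, if_pos rfl, mul_one]
            ring
          · -- k < m
            have hdx : (X * P k).natDegree < m + 1 := by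
              refine lt_of_le_of_lt natDegree_mul_le ?_
              rw [natDegree_X, hdeg]
              omega
            rw [show X * P (m + 1) * P k = (X * P k) * P (m + 1) from by ring,
              hlow (m + 1) (X * P k) hdx, horth m k, if_neg (by omega), mul_zero]
            ring
        · rcases (by omega : n = k ∨ n + 1 = k) with rfl | rfl
          · -- k = n
            have h1 : L (P n * P n) = 1 := by rw [horth]; exact if_pos rfl
            have h2 : L (P (n + 1) * P n) = 0 := by rw [horth]; exact if_neg (by omega)
            have hprev : L ((if n = 0 then 0 else P (n - 1)) * P n) = 0 := by
              split_ifs with hn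
              · rw [zero_mul, map_zero]
              · rw [horth]; exact if_neg (by omega)
            rw [h1, h2, hprev, mul_one, mul_zero, mul_zero]
            ring
          · -- k = n + 1
            have h1 : L (P n * P (n + 1)) = 0 := by rw [horth]; exact if_neg (by omega)
            have h2 : L (P (n + 1) * P (n + 1)) = 1 := by rw [horth]; exact if_pos rfl
            have hprev : L ((if n = 0 then 0 else P (n - 1)) * P (n + 1)) = 0 := by
              split_ifs with hn
              · rw [zero_mul, map_zero]
              · rw [horth]; exact if_neg (by omega)
            rw [hkey n, h1, h2, hprev, mul_one, mul_zero, mul_zero, hd]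
            ring
    have := sub_eq_zero.mp main
    exact this.symm
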